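/- For a > 0, T > 0, define B = e^{a²} Φ(T − 2a). If β ∈ (3/4, 1), T = √(2 log d), a = x₁√(log d) with 1/√2 < x₁ ≤ √2 and x₁ < √2(1 − √(1−β)), then d^{1−2β}·B → 0 as d → ∞. -/
import Mathlib

open Filter Real MeasureTheory

noncomputable def stdNormalCDF (z : ℝ) : ℝ :=
  ∫ t in Set.Iic z, (Real.sqrt (2 * π))⁻¹ * Real.exp (-t^2 / 2)

lemma gauss_int : MeasureTheory.Integrable (fun t : ℝ => (Real.sqrt (2 * π))⁻¹ * Real.exp (-t^2 / 2)) := by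
  have h := (integrable_exp_neg_mul_sq (by norm_num : (0:ℝ) < 1/2)).const_mul (Real.sqrt (2 * π))⁻¹
  convert h using 2 with t
  ring_nf

lemma cdf_nonneg (z : ℝ) : 0 ≤ stdNormalCDF z := by
  apply MeasureTheory.setIntegral_nonneg measurableSet_Iic
  intro t _
  positivity

lemma cdf_le (z : ℝ) (hz : z ≤ -1) : stdNormalCDF z ≤ Real.exp (-z^2/2) := by
  have hb : stdNormalCDF z ≤ ∫ t in Set.Iic z, Real.exp (-z^2/2 - z + t) := by
    apply MeasureTheory.setIntegral_mono_on gauss_int.integrableOn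
    · have : (fun t : ℝ => Real.exp (-z^2/2 - z + t)) =
          fun t => Real.exp (-z^2/2 - z) * Real.exp t := by
        funext t; rw [← Real.exp_add]
      rw [this]
      exact (integrableOn_exp_Iic z).const_mul _
    · exact measurableSet_Iic
    · intro t ht
      simp only [Set.mem_Iic] at ht
      have h1 : (Real.sqrt (2 * π))⁻¹ ≤ 1 := by
        rw [inv_le_one_iff₀]
        right
        rw [show (1:ℝ) = Real.sqrt 1 by simp]
        apply Real.sqrt_le_sqrt
        nlinarith [Real.pi_gt_three]
      calc (Real.sqrt (2 * π))⁻¹ * Real.exp (-t^2 / 2) ≤ 1 * Real.exp (-t^2/2) := by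
            apply mul_le_mul_of_nonneg_right h1 (Real.exp_nonneg _)
        _ = Real.exp (-t^2/2) := one_mul _
        _ ≤ Real.exp (-z^2/2 - z + t) := by
            apply Real.exp_le_exp.mpr
            nlinarith [sq_nonneg (t - z), mul_nonneg (by linarith : (0:ℝ) ≤ -z-1) (by linarith : (0:ℝ) ≤ z - t)]
  calc stdNormalCDF z ≤ ∫ t in Set.Iic z, Real.exp (-z^2/2 - z + t) := hb
    _ = Real.exp (-z^2/2 - z) * ∫ t in Set.Iic z, Real.exp t := by
        rw [← MeasureTheory.integral_const_mul]
        congr 1; funext t; rw [← Real.exp_add]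
    _ = Real.exp (-z^2/2) := by
        rw [integral_exp_Iic, ← Real.exp_add]; ring_nf

theorem stmt_16 (β x₁ : ℝ) (hβ : β ∈ Set.Ioo (3/4 : ℝ) 1)
    (hx₁l : (Real.sqrt 2)⁻¹ < x₁) (hx₁u : x₁ ≤ Real.sqrt 2)
    (hx₁ : x₁ < Real.sqrt 2 * (1 - Real.sqrt (1 - β))) :
    Tendsto (fun d : ℕ =>
        (d : ℝ)^(1 - 2*β) *
          (Real.exp ((x₁ * Real.sqrt (Real.log d))^2) *
            stdNormalCDF (Real.sqrt (2 * Real.log d) - 2 * (x₁ * Real.sqrt (Real.log d)))))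
      atTop (nhds 0) := by
  obtain ⟨hβl, hβu⟩ := hβ
  have h2 : Real.sqrt 2 ^ 2 = 2 := Real.sq_sqrt (by norm_num)
  have hs2pos : (0:ℝ) < Real.sqrt 2 := Real.sqrt_pos.mpr (by norm_num)
  -- the exponent coefficient
  set c : ℝ := 2*(1-β) - (Real.sqrt 2 - x₁)^2 with hc
  have hcneg : c < 0 := by
    have h1β : (0:ℝ) ≤ 1 - β := by linarith
    have hsq : Real.sqrt (1-β) ^ 2 = 1 - β := Real.sq_sqrt h1β
    have hgt : Real.sqrt 2 * Real.sqrt (1-β) < Real.sqrt 2 - x₁ := by nlinarith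
    have hge0 : (0:ℝ) ≤ Real.sqrt 2 * Real.sqrt (1-β) :=
      mul_nonneg hs2pos.le (Real.sqrt_nonneg _)
    nlinarith
  have hx₁pos : 0 < x₁ := lt_trans (by positivity) hx₁l
  have hk : Real.sqrt 2 < 2 * x₁ := by
    rw [inv_lt_iff_one_lt_mul₀ hs2pos] at hx₁l
    nlinarith
  -- squeeze
  have hlim : Tendsto (fun d : ℕ => (d:ℝ) ^ c) atTop (nhds 0) := by
    have := tendsto_rpow_neg_atTop (y := -c) (by linarith)
    simp only [neg_neg] at this
    exact this.comp tendsto_natCast_atTop_atTop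
  apply squeeze_zero' ?_ ?_ hlim
  · filter_upwards [eventually_gt_atTop 0] with d _
    have := cdf_nonneg (Real.sqrt (2 * Real.log d) - 2 * (x₁ * Real.sqrt (Real.log d)))
    positivity
  · -- eventually d large enough: log d ≥ max 1 (1/(2x₁-√2))²
    have htop : Tendsto (fun d : ℕ => Real.log d) atTop atTop :=
      Real.tendsto_log_atTop.comp tendsto_natCast_atTop_atTop
    filter_upwards [htop.eventually_ge_atTop (max 1 ((2*x₁ - Real.sqrt 2)⁻¹^2)),
        eventually_gt_atTop 0] with d hd hd0
    have hld1 : (1:ℝ) ≤ Real.log d := le_trans (le_max_left _ _) hd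
    have hld0 : (0:ℝ) ≤ Real.log d := by linarith
    have hsql : Real.sqrt (Real.log d) ^ 2 = Real.log d := Real.sq_sqrt hld0
    set L := Real.sqrt (Real.log d) with hL
    have hLpos : 0 < L := Real.sqrt_pos.mpr (by linarith)
    set z : ℝ := Real.sqrt (2 * Real.log d) - 2 * (x₁ * L) with hz
    have hzval : z = (Real.sqrt 2 - 2 * x₁) * L := by
      rw [hz, Real.sqrt_mul (by norm_num)]
      ring
    have hkpos : 0 < 2 * x₁ - Real.sqrt 2 := by linarith
    have hzle : z ≤ -1 := by
      rw [hzval]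
      have hL1 : (2*x₁ - Real.sqrt 2)⁻¹ ≤ L := by
        rw [hL]
        have : (2*x₁ - Real.sqrt 2)⁻¹^2 ≤ Real.log d := le_trans (le_max_right _ _) hd
        calc (2*x₁ - Real.sqrt 2)⁻¹ = Real.sqrt ((2*x₁ - Real.sqrt 2)⁻¹^2) := by
              rw [Real.sqrt_sq (by positivity)]
          _ ≤ Real.sqrt (Real.log d) := Real.sqrt_le_sqrt this
      have : 1 ≤ (2*x₁ - Real.sqrt 2) * L := by
        rw [← inv_le_iff_one_le_mul₀' hkpos] at *
        exact hL1
      nlinarith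
    have hcdf := cdf_le z hzle
    have hz2 : z^2 = (Real.sqrt 2 - 2*x₁)^2 * Real.log d := by
      rw [hzval]; rw [mul_pow, hsql]
    have hdpos : (0:ℝ) < d := by exact_mod_cast hd0
    have hrpow : (d:ℝ)^(1-2*β) = Real.exp ((1-2*β) * Real.log d) := by
      rw [Real.rpow_def_of_pos hdpos, mul_comm]
    calc (d : ℝ)^(1 - 2*β) * (Real.exp ((x₁ * L)^2) * stdNormalCDF z)
        ≤ (d : ℝ)^(1 - 2*β) * (Real.exp ((x₁ * L)^2) * Real.exp (-z^2/2)) := by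
          apply mul_le_mul_of_nonneg_left _ (Real.rpow_nonneg hdpos.le _)
          exact mul_le_mul_of_nonneg_left hcdf (Real.exp_nonneg _)
      _ = Real.exp ((1-2*β) * Real.log d + (x₁*L)^2 + (-z^2/2)) := by
          rw [hrpow, ← Real.exp_add, ← Real.exp_add, add_assoc]
      _ = Real.exp (c * Real.log d) := by
          congr 1
          rw [hz2, mul_pow, hsql, hc]
          linear_combination Real.log (d:ℝ) / 2 * h2
      _ = Real.exp (Real.log d * c) := by rw [mul_comm]
      _ = (d:ℝ) ^ c := (Real.rpow_def_of_pos hdpos _).symm
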